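/- There exists a universal constant $C>0$ with the following property. Let $\bar f:[0,1]\to[0,\infty)$ be continuously differentiable and concave with $\bar f(1)=0$, let $f:[0,1]\to\mathbb R$ be continuous with $|f|\le\bar f$ on $[0,1]$, let $n\ge 1$ be an integer, and define $f_n(r) = -r^{-4n}\int_0^r s^{8n-1}\big(\int_s^1 \tau^{1-4n} f(\tau)\,d\tau\big)ds$ for $r\in(0,1)$. Then for all $r\in(0,1)$: $|f_n(r)| \le \frac{C\,r^2}{n^2}\,M(r)$, where $M(r)=\sup_{\tau\in[0,r]}\bar f(\tau)+\sup_{\tau\in[0,r]}\tau\bar f'(\tau)$. -/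

import Mathlib

open Real MeasureTheory Set intervalIntegral

private lemma zpow_anti_base {s r : ℝ} (hs : 0 < s) (hsr : s ≤ r) {e : ℤ} (he : e ≤ 0) :
    r ^ e ≤ s ^ e := by
  obtain ⟨m, rfl⟩ : ∃ m : ℕ, e = -(m : ℤ) := ⟨e.natAbs, by omega⟩
  rw [zpow_neg, zpow_neg, zpow_natCast, zpow_natCast]
  exact inv_anti₀ (pow_pos hs m) (pow_le_pow_left₀ hs.le hsr m)

theorem stmt7 :
    ∃ C > (0:ℝ), ∀ (fbar : ℝ → ℝ),
      (∀ r ∈ Set.Icc (0:ℝ) 1, 0 ≤ fbar r) →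
      (∀ x ∈ Set.Icc (0:ℝ) 1, DifferentiableAt ℝ fbar x) →
      ContinuousOn (deriv fbar) (Set.Icc 0 1) →
      ConcaveOn ℝ (Set.Icc 0 1) fbar →
      fbar 1 = 0 →
      ∀ (f : ℝ → ℝ), ContinuousOn f (Set.Icc 0 1) →
      (∀ r ∈ Set.Icc (0:ℝ) 1, |f r| ≤ fbar r) →
      ∀ (n : ℕ), 1 ≤ n →
      ∀ (fn : ℝ → ℝ),
      (∀ r ∈ Set.Ioo (0:ℝ) 1,
        fn r = -(r ^ (-(4 * (n:ℤ)))) *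
          ∫ s in (0:ℝ)..r, s ^ (8 * (n:ℤ) - 1) * ∫ τ in s..(1:ℝ), τ ^ (1 - 4 * (n:ℤ)) * f τ) →
      ∀ r ∈ Set.Ioo (0:ℝ) 1,
        |fn r| ≤ C * r ^ 2 / (n:ℝ) ^ 2 *
            (sSup (fbar '' Set.Icc 0 r) +
              sSup ((fun τ => τ * deriv fbar τ) '' Set.Icc 0 r)) := by
  refine ⟨2, two_pos, ?_⟩
  intro fbar hfb0 hdiff hderivC hconc hfb1 f hfC hfle n hn fn hfn r hr
  obtain ⟨hr0, hr1⟩ := hr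
  have hrI : r ∈ Icc (0:ℝ) 1 := ⟨hr0.le, hr1.le⟩
  have hsub : Icc (0:ℝ) r ⊆ Icc 0 1 := Icc_subset_Icc le_rfl hr1.le
  have hn1 : (1:ℝ) ≤ (n:ℝ) := by exact_mod_cast hn
  have hfbC : ContinuousOn fbar (Icc 0 1) := fun x hx =>
    (hdiff x hx).continuousAt.continuousWithinAt
  set A := sSup (fbar '' Icc (0:ℝ) r) with hAdef
  set B := sSup ((fun τ => τ * deriv fbar τ) '' Icc (0:ℝ) r) with hBdef
  have hbddA : BddAbove (fbar '' Icc (0:ℝ) r) :=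
    (isCompact_Icc.image_of_continuousOn (hfbC.mono hsub)).bddAbove
  have hbddB : BddAbove ((fun τ => τ * deriv fbar τ) '' Icc (0:ℝ) r) :=
    (isCompact_Icc.image_of_continuousOn (continuousOn_id.mul (hderivC.mono hsub))).bddAbove
  have hA_le : ∀ τ ∈ Icc (0:ℝ) r, fbar τ ≤ A := fun τ hτ =>
    le_csSup hbddA (mem_image_of_mem _ hτ)
  have hB_le : ∀ τ ∈ Icc (0:ℝ) r, τ * deriv fbar τ ≤ B := fun τ hτ =>
    le_csSup hbddB (mem_image_of_mem _ hτ)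
  have hA0 : 0 ≤ A := le_trans (hfb0 0 ⟨le_rfl, zero_le_one⟩) (hA_le 0 ⟨le_rfl, hr0.le⟩)
  have hB0 : 0 ≤ B := by
    have h := hB_le 0 ⟨le_rfl, hr0.le⟩
    simpa using h
  set M := A + B with hMdef
  have hM0 : 0 ≤ M := add_nonneg hA0 hB0
  -- tangent line bound
  have hder_r : deriv fbar r ≤ B / r := by
    rw [le_div_iff₀ hr0, mul_comm]
    exact hB_le r ⟨hr0.le, le_rfl⟩
  have htan : ∀ τ ∈ Icc (0:ℝ) 1, r ≤ τ → fbar τ ≤ A + B / r * τ := by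
    intro τ hτ hrτ
    have h4 : fbar r ≤ A := hA_le r ⟨hr0.le, le_rfl⟩
    have hBr0 : 0 ≤ B / r := div_nonneg hB0 hr0.le
    rcases eq_or_lt_of_le hrτ with h | h
    · rw [← h]
      have : 0 ≤ B / r * r := mul_nonneg hBr0 hr0.le
      linarith
    · have hs := hconc.slope_le_deriv hrI hτ h (hdiff r hrI)
      rw [slope_def_field] at hs
      have h1 : fbar τ - fbar r ≤ deriv fbar r * (τ - r) :=
        (div_le_iff₀ (sub_pos.mpr h)).mp hs
      have h2 : deriv fbar r * (τ - r) ≤ B / r * (τ - r) :=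
        mul_le_mul_of_nonneg_right hder_r (by linarith)
      have h3 : B / r * (τ - r) ≤ B / r * τ :=
        mul_le_mul_of_nonneg_left (by linarith) hBr0
      linarith
  -- notation
  set d2 : ℝ := 4 * (n:ℝ) - 2 with hd2
  set d3 : ℝ := 4 * (n:ℝ) - 3 with hd3
  have hd2p : 0 < d2 := by rw [hd2]; linarith
  have hd3p : 0 < d3 := by rw [hd3]; linarith
  have hd32 : d3 ≤ d2 := by rw [hd2, hd3]; linarith
  clear_value A B M d2 d3
  have hcontz : ∀ c : ℝ, 0 < c →
      ContinuousOn (fun τ : ℝ => τ ^ (1 - 4*(n:ℤ)) * f τ) (Icc c 1) := by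
    intro c hc
    apply ContinuousOn.mul
    · intro τ hτ
      exact (continuousAt_zpow₀ τ _ (Or.inl (ne_of_gt (lt_of_lt_of_le hc hτ.1)))).continuousWithinAt
    · exact hfC.mono (Icc_subset_Icc hc.le le_rfl)
  have hizpow : ∀ (a b : ℝ) (k : ℤ), 0 < a → a ≤ b → k ≠ -1 →
      (∫ τ in a..b, τ ^ k) = (b ^ (k+1) - a ^ (k+1)) / ((k:ℝ) + 1) := by
    intro a b k ha hab hk
    apply integral_zpow
    right
    refine ⟨hk, ?_⟩
    rw [uIcc_of_le hab]
    exact fun h => lt_irrefl (0:ℝ) (ha.trans_le h.1)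
  -- bound on the inner integral
  have hIbound : ∀ s, 0 < s → s ≤ r →
      |∫ τ in s..(1:ℝ), τ ^ (1 - 4*(n:ℤ)) * f τ| ≤ 2 * M / d3 * s ^ (2 - 4*(n:ℤ)) := by
    intro s hs0 hsr
    have hs1 : s ≤ 1 := hsr.trans hr1.le
    have hse : (0:ℝ) ≤ s ^ (2 - 4*(n:ℤ)) := (zpow_pos hs0 _).le
    have hre : (0:ℝ) ≤ r ^ (2 - 4*(n:ℤ)) := (zpow_pos hr0 _).le
    have hmono : r ^ (2 - 4*(n:ℤ)) ≤ s ^ (2 - 4*(n:ℤ)) :=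
      zpow_anti_base hs0 hsr (by omega)
    have hint1 : IntervalIntegrable (fun τ : ℝ => τ ^ (1 - 4*(n:ℤ)) * f τ) volume s r := by
      apply ContinuousOn.intervalIntegrable
      apply (hcontz s hs0).mono
      rw [uIcc_of_le hsr]
      exact Icc_subset_Icc le_rfl hr1.le
    have hint2 : IntervalIntegrable (fun τ : ℝ => τ ^ (1 - 4*(n:ℤ)) * f τ) volume r 1 := by
      apply ContinuousOn.intervalIntegrable
      apply (hcontz r hr0).mono
      rw [uIcc_of_le hr1.le]
    have hsplit : (∫ τ in s..(1:ℝ), τ ^ (1 - 4*(n:ℤ)) * f τ)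
        = (∫ τ in s..r, τ ^ (1 - 4*(n:ℤ)) * f τ)
          + (∫ τ in r..(1:ℝ), τ ^ (1 - 4*(n:ℤ)) * f τ) :=
      (integral_add_adjacent_intervals hint1 hint2).symm
    -- piece 1
    have hg1int : IntervalIntegrable (fun τ : ℝ => A * τ ^ (1 - 4*(n:ℤ))) volume s r := by
      apply ContinuousOn.intervalIntegrable
      intro τ hτ
      rw [uIcc_of_le hsr] at hτ
      exact continuousWithinAt_const.mul
        (continuousAt_zpow₀ τ _ (Or.inl (ne_of_gt (hs0.trans_le hτ.1)))).continuousWithinAt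
    have hp1 : |∫ τ in s..r, τ ^ (1 - 4*(n:ℤ)) * f τ|
        ≤ |∫ τ in s..r, A * τ ^ (1 - 4*(n:ℤ))| := by
      rw [← Real.norm_eq_abs]
      apply intervalIntegral.norm_integral_le_abs_of_norm_le _ hg1int
      rw [ae_restrict_iff' measurableSet_uIoc]
      apply ae_of_all
      intro τ hτ
      rw [uIoc_of_le hsr] at hτ
      have hτ0 : 0 < τ := hs0.trans hτ.1
      have hz : 0 ≤ τ ^ (1 - 4*(n:ℤ)) := (zpow_pos hτ0 _).le
      rw [Real.norm_eq_abs, abs_mul, abs_of_nonneg hz]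
      have hfτ : |f τ| ≤ A := (hfle τ ⟨hτ0.le, hτ.2.trans hr1.le⟩).trans (hA_le τ ⟨hτ0.le, hτ.2⟩)
      calc τ ^ (1 - 4*(n:ℤ)) * |f τ| ≤ τ ^ (1 - 4*(n:ℤ)) * A :=
            mul_le_mul_of_nonneg_left hfτ hz
        _ = A * τ ^ (1 - 4*(n:ℤ)) := mul_comm _ _
    have hval1 : (∫ τ in s..r, A * τ ^ (1 - 4*(n:ℤ)))
        = A * ((s ^ (2 - 4*(n:ℤ)) - r ^ (2 - 4*(n:ℤ))) / d2) := by
      rw [intervalIntegral.integral_const_mul, hizpow s r _ hs0 hsr (by omega)]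
      have he : (1 - 4*(n:ℤ) + 1) = 2 - 4*(n:ℤ) := by ring
      rw [he]
      have hc : ((1 - 4*(n:ℤ) : ℤ) : ℝ) + 1 = -d2 := by push_cast; rw [hd2]; ring
      rw [hc, div_neg, ← neg_div, neg_sub]
    have hb1 : |∫ τ in s..r, τ ^ (1 - 4*(n:ℤ)) * f τ|
        ≤ A * s ^ (2 - 4*(n:ℤ)) / d2 := by
      refine hp1.trans ?_
      rw [hval1, abs_of_nonneg (mul_nonneg hA0 (div_nonneg (sub_nonneg.mpr hmono) hd2p.le)),
        mul_div_assoc]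
      apply mul_le_mul_of_nonneg_left _ hA0
      exact div_le_div_of_nonneg_right (by linarith) hd2p.le
    -- piece 2
    have hg2int : IntervalIntegrable
        (fun τ : ℝ => A * τ ^ (1 - 4*(n:ℤ)) + (B/r) * τ ^ (2 - 4*(n:ℤ))) volume r 1 := by
      apply ContinuousOn.intervalIntegrable
      intro τ hτ
      rw [uIcc_of_le hr1.le] at hτ
      have hτ0 : (0:ℝ) < τ := hr0.trans_le hτ.1
      exact (continuousWithinAt_const.mul
          (continuousAt_zpow₀ τ _ (Or.inl hτ0.ne')).continuousWithinAt).add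
        (continuousWithinAt_const.mul
          (continuousAt_zpow₀ τ _ (Or.inl hτ0.ne')).continuousWithinAt)
    have hia : IntervalIntegrable (fun τ : ℝ => τ ^ (1 - 4*(n:ℤ))) volume r 1 := by
      apply ContinuousOn.intervalIntegrable
      intro τ hτ
      rw [uIcc_of_le hr1.le] at hτ
      exact (continuousAt_zpow₀ τ _ (Or.inl (ne_of_gt (hr0.trans_le hτ.1)))).continuousWithinAt
    have hib : IntervalIntegrable (fun τ : ℝ => τ ^ (2 - 4*(n:ℤ))) volume r 1 := by
      apply ContinuousOn.intervalIntegrable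
      intro τ hτ
      rw [uIcc_of_le hr1.le] at hτ
      exact (continuousAt_zpow₀ τ _ (Or.inl (ne_of_gt (hr0.trans_le hτ.1)))).continuousWithinAt
    have hp2 : |∫ τ in r..(1:ℝ), τ ^ (1 - 4*(n:ℤ)) * f τ|
        ≤ |∫ τ in r..(1:ℝ), (A * τ ^ (1 - 4*(n:ℤ)) + (B/r) * τ ^ (2 - 4*(n:ℤ)))| := by
      rw [← Real.norm_eq_abs]
      apply intervalIntegral.norm_integral_le_abs_of_norm_le _ hg2int
      rw [ae_restrict_iff' measurableSet_uIoc]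
      apply ae_of_all
      intro τ hτ
      rw [uIoc_of_le hr1.le] at hτ
      have hτ0 : 0 < τ := hr0.trans hτ.1
      have hz1 : 0 ≤ τ ^ (1 - 4*(n:ℤ)) := (zpow_pos hτ0 _).le
      have hmul : τ ^ (1 - 4*(n:ℤ)) * τ = τ ^ (2 - 4*(n:ℤ)) := by
        have h := zpow_add₀ hτ0.ne' (1 - 4*(n:ℤ)) 1
        rw [zpow_one] at h
        rw [← h]
        congr 1
        ring
      rw [Real.norm_eq_abs, abs_mul, abs_of_nonneg hz1]
      have hfb : |f τ| ≤ A + B / r * τ :=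
        (hfle τ ⟨hτ0.le, hτ.2⟩).trans (htan τ ⟨hτ0.le, hτ.2⟩ hτ.1.le)
      calc τ ^ (1 - 4*(n:ℤ)) * |f τ| ≤ τ ^ (1 - 4*(n:ℤ)) * (A + B / r * τ) :=
            mul_le_mul_of_nonneg_left hfb hz1
        _ = A * τ ^ (1 - 4*(n:ℤ)) + (B/r) * (τ ^ (1 - 4*(n:ℤ)) * τ) := by ring
        _ = A * τ ^ (1 - 4*(n:ℤ)) + (B/r) * τ ^ (2 - 4*(n:ℤ)) := by rw [hmul]
    have hone2 : (1:ℝ) ≤ r ^ (2 - 4*(n:ℤ)) := by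
      have h := zpow_anti_base hr0 hr1.le (e := 2 - 4*(n:ℤ)) (by omega)
      rwa [one_zpow] at h
    have hone3 : (1:ℝ) ≤ r ^ (3 - 4*(n:ℤ)) := by
      have h := zpow_anti_base hr0 hr1.le (e := 3 - 4*(n:ℤ)) (by omega)
      rwa [one_zpow] at h
    have hval2 : (∫ τ in r..(1:ℝ), (A * τ ^ (1 - 4*(n:ℤ)) + (B/r) * τ ^ (2 - 4*(n:ℤ))))
        = A * ((r ^ (2 - 4*(n:ℤ)) - 1) / d2) + (B/r) * ((r ^ (3 - 4*(n:ℤ)) - 1) / d3) := by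
      rw [intervalIntegral.integral_add (hia.const_mul A) (hib.const_mul (B/r)),
        intervalIntegral.integral_const_mul, intervalIntegral.integral_const_mul,
        hizpow r 1 _ hr0 hr1.le (by omega), hizpow r 1 _ hr0 hr1.le (by omega)]
      have he1 : (1 - 4*(n:ℤ) + 1) = 2 - 4*(n:ℤ) := by ring
      have he2 : (2 - 4*(n:ℤ) + 1) = 3 - 4*(n:ℤ) := by ring
      rw [he1, he2, one_zpow, one_zpow]
      have hc1 : ((1 - 4*(n:ℤ) : ℤ) : ℝ) + 1 = -d2 := by push_cast; rw [hd2]; ring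
      have hc2 : ((2 - 4*(n:ℤ) : ℤ) : ℝ) + 1 = -d3 := by push_cast; rw [hd3]; ring
      rw [hc1, hc2, div_neg, div_neg, ← neg_div, ← neg_div, neg_sub, neg_sub]
    have hr3eq : (B/r) * (r ^ (3 - 4*(n:ℤ)) / d3) = B * r ^ (2 - 4*(n:ℤ)) / d3 := by
      have h : r ^ (3 - 4*(n:ℤ)) = r * r ^ (2 - 4*(n:ℤ)) := by
        have h := zpow_add₀ hr0.ne' 1 (2 - 4*(n:ℤ))
        rw [zpow_one] at h
        rw [← h]
        congr 1
        ring
      rw [h]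
      field_simp
    have hb2 : |∫ τ in r..(1:ℝ), τ ^ (1 - 4*(n:ℤ)) * f τ|
        ≤ A * r ^ (2 - 4*(n:ℤ)) / d2 + B * r ^ (2 - 4*(n:ℤ)) / d3 := by
      refine hp2.trans ?_
      have hBr0 : 0 ≤ B / r := div_nonneg hB0 hr0.le
      rw [hval2, abs_of_nonneg (add_nonneg
        (mul_nonneg hA0 (div_nonneg (by linarith) hd2p.le))
        (mul_nonneg hBr0 (div_nonneg (by linarith) hd3p.le)))]
      have t1 : A * ((r ^ (2 - 4*(n:ℤ)) - 1) / d2) ≤ A * r ^ (2 - 4*(n:ℤ)) / d2 := by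
        rw [mul_div_assoc]
        apply mul_le_mul_of_nonneg_left _ hA0
        exact div_le_div_of_nonneg_right (by linarith) hd2p.le
      have t2 : (B/r) * ((r ^ (3 - 4*(n:ℤ)) - 1) / d3) ≤ B * r ^ (2 - 4*(n:ℤ)) / d3 := by
        rw [← hr3eq]
        apply mul_le_mul_of_nonneg_left _ hBr0
        exact div_le_div_of_nonneg_right (by linarith [(zpow_pos hr0 (3 - 4*(n:ℤ))).le]) hd3p.le
      linarith
    -- combine
    have habs : |∫ τ in s..(1:ℝ), τ ^ (1 - 4*(n:ℤ)) * f τ|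
        ≤ A * s ^ (2 - 4*(n:ℤ)) / d2
          + (A * r ^ (2 - 4*(n:ℤ)) / d2 + B * r ^ (2 - 4*(n:ℤ)) / d3) := by
      rw [hsplit]
      exact (abs_add_le _ _).trans (add_le_add hb1 hb2)
    refine habs.trans ?_
    have t1 : A * s ^ (2 - 4*(n:ℤ)) / d2 ≤ A * s ^ (2 - 4*(n:ℤ)) / d3 :=
      div_le_div₀ (mul_nonneg hA0 hse) le_rfl hd3p hd32
    have t2 : A * r ^ (2 - 4*(n:ℤ)) / d2 ≤ A * s ^ (2 - 4*(n:ℤ)) / d3 :=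
      div_le_div₀ (mul_nonneg hA0 hse) (mul_le_mul_of_nonneg_left hmono hA0) hd3p hd32
    have t3 : B * r ^ (2 - 4*(n:ℤ)) / d3 ≤ B * s ^ (2 - 4*(n:ℤ)) / d3 :=
      div_le_div₀ (mul_nonneg hB0 hse) (mul_le_mul_of_nonneg_left hmono hB0) hd3p le_rfl
    have t4 : (2*A + B) * s ^ (2 - 4*(n:ℤ)) / d3 ≤ (2*A + 2*B) * s ^ (2 - 4*(n:ℤ)) / d3 :=
      div_le_div₀ (mul_nonneg (by linarith) hse)
        (mul_le_mul_of_nonneg_right (by linarith) hse) hd3p le_rfl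
    have e1 : A * s ^ (2 - 4*(n:ℤ)) / d3 + A * s ^ (2 - 4*(n:ℤ)) / d3
        + B * s ^ (2 - 4*(n:ℤ)) / d3 = (2*A + B) * s ^ (2 - 4*(n:ℤ)) / d3 := by ring
    have e2 : 2 * M / d3 * s ^ (2 - 4*(n:ℤ)) = (2*A + 2*B) * s ^ (2 - 4*(n:ℤ)) / d3 := by
      rw [hMdef]; ring
    linarith
  -- outer bound
  have houter : ∀ᵐ t ∂(volume.restrict (Set.uIoc (0:ℝ) r)),
      ‖t ^ (8*(n:ℤ) - 1) * ∫ τ in t..(1:ℝ), τ ^ (1 - 4*(n:ℤ)) * f τ‖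
        ≤ 2 * M / d3 * t ^ (4*n+1 : ℕ) := by
    rw [ae_restrict_iff' measurableSet_uIoc]
    apply ae_of_all
    intro s hs
    rw [uIoc_of_le hr0.le] at hs
    have hs0 : 0 < s := hs.1
    have hz : (0:ℝ) ≤ s ^ (8*(n:ℤ) - 1) := (zpow_pos hs0 _).le
    rw [Real.norm_eq_abs, abs_mul, abs_of_nonneg hz]
    have hpoweq : s ^ (8*(n:ℤ) - 1) * s ^ (2 - 4*(n:ℤ)) = s ^ (4*n+1 : ℕ) := by
      rw [← zpow_add₀ hs0.ne', ← zpow_natCast s (4*n+1)]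
      congr 1
      push_cast
      ring
    calc s ^ (8*(n:ℤ) - 1) * |∫ τ in s..(1:ℝ), τ ^ (1 - 4*(n:ℤ)) * f τ|
        ≤ s ^ (8*(n:ℤ) - 1) * (2 * M / d3 * s ^ (2 - 4*(n:ℤ))) :=
          mul_le_mul_of_nonneg_left (hIbound s hs0 hs.2) hz
      _ = 2 * M / d3 * (s ^ (8*(n:ℤ) - 1) * s ^ (2 - 4*(n:ℤ))) := by ring
      _ = 2 * M / d3 * s ^ (4*n+1 : ℕ) := by rw [hpoweq]
  have hφint : IntervalIntegrable (fun s : ℝ => 2 * M / d3 * s ^ (4*n+1 : ℕ)) volume 0 r :=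
    (continuous_const.mul (continuous_pow _)).intervalIntegrable _ _
  have hmain : ‖∫ s in (0:ℝ)..r, s ^ (8*(n:ℤ) - 1) * ∫ τ in s..(1:ℝ), τ ^ (1 - 4*(n:ℤ)) * f τ‖
      ≤ |∫ s in (0:ℝ)..r, 2 * M / d3 * s ^ (4*n+1 : ℕ)| :=
    intervalIntegral.norm_integral_le_abs_of_norm_le houter hφint
  have hφval : (∫ s in (0:ℝ)..r, 2 * M / d3 * s ^ (4*n+1 : ℕ))
      = 2 * M / d3 * (r ^ (4*n+2 : ℕ) / (4*(n:ℝ)+2)) := by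
    rw [intervalIntegral.integral_const_mul, integral_pow,
      zero_pow (by omega : 4*n+1+1 ≠ 0), show 4*n+1+1 = 4*n+2 from by ring]
    push_cast
    ring
  have hφnn : 0 ≤ 2 * M / d3 * (r ^ (4*n+2 : ℕ) / (4*(n:ℝ)+2)) := by positivity
  have hmain2 : |∫ s in (0:ℝ)..r, s ^ (8*(n:ℤ) - 1) * ∫ τ in s..(1:ℝ), τ ^ (1 - 4*(n:ℤ)) * f τ|
      ≤ 2 * M / d3 * (r ^ (4*n+2 : ℕ) / (4*(n:ℝ)+2)) := by
    rw [← abs_of_nonneg hφnn, ← hφval]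
    exact hmain
  -- final assembly
  rw [hfn r ⟨hr0, hr1⟩, abs_mul, abs_neg, abs_of_nonneg (zpow_pos hr0 _).le]
  have hpow2 : r ^ (-(4*(n:ℤ))) * r ^ (4*n+2 : ℕ) = r ^ 2 := by
    rw [← zpow_natCast r (4*n+2), ← zpow_add₀ hr0.ne']
    have h : (-(4*(n:ℤ)) + ((4*n+2 : ℕ) : ℤ)) = 2 := by push_cast; ring
    rw [h, show (2:ℤ) = ((2:ℕ):ℤ) from rfl, zpow_natCast]
  have hden : (n:ℝ)^2 ≤ d3 * (4*(n:ℝ)+2) := by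
    rw [hd3]; nlinarith
  calc r ^ (-(4*(n:ℤ)))
        * |∫ s in (0:ℝ)..r, s ^ (8*(n:ℤ) - 1) * ∫ τ in s..(1:ℝ), τ ^ (1 - 4*(n:ℤ)) * f τ|
      ≤ r ^ (-(4*(n:ℤ))) * (2 * M / d3 * (r ^ (4*n+2 : ℕ) / (4*(n:ℝ)+2))) :=
        mul_le_mul_of_nonneg_left hmain2 (zpow_pos hr0 _).le
    _ = 2 * M / (d3 * (4*(n:ℝ)+2)) * r ^ 2 := by rw [← hpow2, ← div_div]; ring
    _ ≤ 2 * M / (n:ℝ)^2 * r ^ 2 := by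
        apply mul_le_mul_of_nonneg_right _ (sq_nonneg r)
        exact div_le_div₀ (by positivity) le_rfl (by positivity) hden
    _ = 2 * r ^ 2 / (n:ℝ)^2 * M := by ring
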